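/- Fix n ≥ 1, let I ⊆ ℝ be an interval, and let u : I → ℝ be continuous. Suppose a : I → ℂ^n is differentiable and satisfies the phase system a'(t) = −a(t) − 2∑_{s=1}^{n−1} e^{−isu(t)} A(a(t))^s a(t), and q : I → ℂ^n is differentiable and satisfies the adjoint system q'(t) = q(t) + 2∑_{s=1}^{n−1} e^{−isu(t)}(s+1)(A(a(t))ᵀ)^s q(t). Then for every 1 ≤ j ≤ n, the function t ↦ Φ_j(a(t), q(t)) = ∑_{m=j}^{n} (m−j+1) a_{m−j+1}(t) q_m(t) is constant on I. (That is, Φ_1,…,Φ_n are first integrals of the coupled system.) -/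

import Mathlib

open Complex Metric

/-- The lower-triangular nilpotent Toeplitz matrix `A(a)` with `A(a)_{j,k} = a_{j-k}`
(1-indexed) for `j > k` and `0` otherwise. -/
noncomputable def toeplitzA {n : ℕ} (a : Fin n → ℂ) : Matrix (Fin n) (Fin n) ℂ :=
  Matrix.of fun j k =>
    if _ : (k : ℕ) < (j : ℕ) then a ⟨(j : ℕ) - (k : ℕ) - 1, by have := j.isLt; omega⟩ else 0

/-- `Φ_j(a,p) = ∑_{m=j}^n (m-j+1) a_{m-j+1} p_m` (1-indexed). -/
noncomputable def Phi {n : ℕ} (j : Fin n) (a p : Fin n → ℂ) : ℂ :=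
  ∑ m : Fin n, if _ : j.1 ≤ m.1 then
    ((m.1 - j.1 + 1 : ℕ) : ℂ) * a ⟨m.1 - j.1, by have := m.isLt; omega⟩ * p m
  else 0


open Polynomial in
noncomputable def paPoly {n : ℕ} (a : Fin n → ℂ) : Polynomial ℂ :=
  ∑ i : Fin n, Polynomial.C (a i) * Polynomial.X ^ ((i : ℕ) + 1)

section Aux
open Polynomial
variable {n : ℕ}

lemma paPoly_coeff (a : Fin n → ℂ) (m : ℕ) :
    (paPoly a).coeff m = if h : 0 < m ∧ m ≤ n then a ⟨m - 1, by omega⟩ else 0 := by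
  unfold paPoly
  rw [Polynomial.finset_sum_coeff]
  simp only [Polynomial.coeff_C_mul, Polynomial.coeff_X_pow]
  split_ifs with h
  · rw [Finset.sum_eq_single (⟨m - 1, by omega⟩ : Fin n)]
    · simp only [mul_ite, mul_one, mul_zero]
      rw [if_pos (by omega)]
    · intro b _ hb
      have hb' : (b : ℕ) ≠ m - 1 := fun hc => hb (Fin.ext hc)
      rw [if_neg (by omega), mul_zero]
    · simp
  · apply Finset.sum_eq_zero
    intro i _
    rw [if_neg (by have := i.isLt; omega), mul_zero]

lemma toeplitzA_apply (a : Fin n → ℂ) (j k : Fin n) :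
    toeplitzA a j k = if (k : ℕ) ≤ j then (paPoly a).coeff ((j : ℕ) - k) else 0 := by
  unfold toeplitzA
  rw [Matrix.of_apply]
  rcases lt_trichotomy (k : ℕ) (j : ℕ) with h | h | h
  · rw [dif_pos h, if_pos h.le, paPoly_coeff, dif_pos (by have := j.isLt; omega)]
  · rw [dif_neg (by omega), if_pos h.le, paPoly_coeff, dif_neg (by omega)]
  · rw [dif_neg (by omega), if_neg (by omega)]

lemma toeplitzA_pow_apply (a : Fin n → ℂ) (s : ℕ) (j k : Fin n) :
    ((toeplitzA a) ^ s) j k =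
      if (k : ℕ) ≤ j then ((paPoly a) ^ s).coeff ((j : ℕ) - k) else 0 := by
  induction s generalizing j k with
  | zero =>
    rw [pow_zero, pow_zero, Matrix.one_apply, Polynomial.coeff_one]
    by_cases h : (k : ℕ) ≤ j
    · rw [if_pos h]
      by_cases h2 : j = k
      · rw [if_pos h2, if_pos (by rw [h2]; omega)]
      · rw [if_neg h2, if_neg (by rw [Fin.ext_iff] at h2; omega)]
    · rw [if_neg h, if_neg (fun h2 => h (le_of_eq (congrArg _ h2.symm)))]
  | succ s ih =>
    rw [pow_succ, Matrix.mul_apply]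
    set g : ℕ → ℂ := fun l =>
      (if l ≤ (j : ℕ) then ((paPoly a) ^ s).coeff ((j : ℕ) - l) else 0) *
      (if (k : ℕ) ≤ l then (paPoly a).coeff (l - (k : ℕ)) else 0) with hg
    have hterm : ∀ l : Fin n, ((toeplitzA a) ^ s) j l * toeplitzA a l k = g (l : ℕ) := by
      intro l; rw [ih, toeplitzA_apply, hg]
    rw [Finset.sum_congr rfl fun l _ => hterm l, Fin.sum_univ_eq_sum_range g]
    by_cases hkj : (k : ℕ) ≤ j
    · rw [if_pos hkj]
      have hsub : Finset.Ico (k : ℕ) ((j : ℕ) + 1) ⊆ Finset.range n := by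
        intro x hx; rw [Finset.mem_Ico] at hx; rw [Finset.mem_range]
        have := j.isLt; omega
      rw [← Finset.sum_subset hsub (by
        intro x hx hx'
        rw [Finset.mem_Ico] at hx'; rw [hg]
        simp only []
        rcases (by omega : ¬ x ≤ (j:ℕ) ∨ ¬ (k:ℕ) ≤ x) with h | h
        · rw [if_neg h, zero_mul]
        · rw [if_neg h, mul_zero])]
      rw [Finset.sum_Ico_eq_sum_range]
      rw [pow_succ', Polynomial.coeff_mul, Finset.Nat.sum_antidiagonal_eq_sum_range_succ_mk]
      rw [show (j : ℕ) + 1 - k = (j : ℕ) - k + 1 by omega]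
      apply Finset.sum_congr rfl
      intro y hy
      rw [Finset.mem_range] at hy
      rw [hg]
      simp only []
      rw [if_pos (by omega), if_pos (by omega),
        show (j : ℕ) - ((k : ℕ) + y) = (j : ℕ) - k - y by omega,
        show (k : ℕ) + y - k = y by omega, mul_comm]
    · rw [if_neg hkj]
      apply Finset.sum_eq_zero
      intro l _
      rw [hg]
      simp only []
      rcases (by omega : ¬ l ≤ (j:ℕ) ∨ ¬ (k:ℕ) ≤ l) with h | h
      · rw [if_neg h, zero_mul]
      · rw [if_neg h, mul_zero]
lemma pow_mulVec (a : Fin n → ℂ) (s : ℕ) (k : Fin n) :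
    (((toeplitzA a) ^ s).mulVec a) k = ((paPoly a) ^ (s + 1)).coeff ((k : ℕ) + 1) := by
  rw [Matrix.mulVec]
  show ∑ l : Fin n, ((toeplitzA a) ^ s) k l * a l = _
  set g : ℕ → ℂ := fun l =>
    (if l ≤ (k : ℕ) then ((paPoly a) ^ s).coeff ((k : ℕ) - l) else 0) *
      (paPoly a).coeff (l + 1) with hg
  have hterm : ∀ l : Fin n, ((toeplitzA a) ^ s) k l * a l = g (l : ℕ) := by
    intro l
    rw [toeplitzA_pow_apply, hg]
    simp only []
    rw [paPoly_coeff, dif_pos ⟨by omega, by have := l.isLt; omega⟩]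
    congr 1
  rw [Finset.sum_congr rfl fun l _ => hterm l, Fin.sum_univ_eq_sum_range g]
  have hsub : Finset.range ((k : ℕ) + 1) ⊆ Finset.range n := by
    intro x hx; rw [Finset.mem_range] at *; have := k.isLt; omega
  rw [← Finset.sum_subset hsub (by
    intro x hx hx'
    rw [Finset.mem_range] at hx'
    rw [hg]; simp only []
    rw [if_neg (by omega), zero_mul])]
  rw [pow_succ', Polynomial.coeff_mul, Finset.Nat.sum_antidiagonal_eq_sum_range_succ_mk]
  conv_rhs => rw [Finset.sum_range_succ']
  dsimp only
  rw [paPoly_coeff, dif_neg (by omega), zero_mul, add_zero]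
  apply Finset.sum_congr rfl
  intro y hy
  rw [Finset.mem_range] at hy
  rw [hg]; simp only []
  rw [if_pos (by omega), show (k : ℕ) + 1 - (y + 1) = (k : ℕ) - y by omega, mul_comm]

lemma coeff_pow_deriv (p : Polynomial ℂ) (s N : ℕ) (hN : 1 ≤ N) :
    (N : ℂ) * (p ^ (s + 1)).coeff N =
      ((s : ℂ) + 1) * ∑ y ∈ Finset.range N,
        (p.coeff (y + 1) * ((y : ℂ) + 1)) * (p ^ s).coeff (N - 1 - y) := by
  have hD := congrArg (fun q : Polynomial ℂ => q.coeff (N - 1))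
    (Polynomial.derivative_pow p (s + 1))
  rw [Polynomial.coeff_derivative] at hD
  rw [show C ((s + 1 : ℕ) : ℂ) * p ^ (s + 1 - 1) * derivative p
      = C ((s + 1 : ℕ) : ℂ) * (derivative p * p ^ s) by
      rw [show s + 1 - 1 = s from rfl]; ring] at hD
  rw [Polynomial.coeff_C_mul, Polynomial.coeff_mul,
    Finset.Nat.sum_antidiagonal_eq_sum_range_succ_mk] at hD
  rw [show (N - 1).succ = N by omega, show N - 1 + 1 = N by omega] at hD
  dsimp only at hD
  have hc : ((N - 1 : ℕ) : ℂ) + 1 = (N : ℂ) := by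
    rw [Nat.cast_sub hN]; ring
  rw [hc] at hD
  rw [mul_comm ((N : ℂ)) _, hD]
  push_cast
  congr 1
  apply Finset.sum_congr rfl
  intro y _
  rw [Polynomial.coeff_derivative]

lemma key_identity (a q : Fin n → ℂ) (j : Fin n) (s : ℕ) :
    Phi j (((toeplitzA a) ^ s).mulVec a) q
      = ((s : ℂ) + 1) * Phi j a ((((toeplitzA a).transpose) ^ s).mulVec q) := by
  have hY : ∀ m : Fin n, ((((toeplitzA a).transpose) ^ s).mulVec q) m
      = ∑ r : Fin n, (if (m : ℕ) ≤ r then ((paPoly a) ^ s).coeff ((r : ℕ) - m) else 0) * q r := by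
    intro m
    rw [← Matrix.transpose_pow, Matrix.mulVec]
    show ∑ r : Fin n, ((toeplitzA a) ^ s).transpose m r * q r = _
    apply Finset.sum_congr rfl
    intro r _
    rw [Matrix.transpose_apply, toeplitzA_pow_apply]
  set gT : ℕ → ℕ → ℂ := fun m r => if h : j.1 ≤ m ∧ m ≤ r ∧ r < n then
      ((s : ℂ) + 1) * (((m - j.1 + 1 : ℕ) : ℂ) * (paPoly a).coeff (m - j.1 + 1) *
        (((paPoly a) ^ s).coeff (r - m) * q ⟨r, h.2.2⟩)) else 0 with hgT
  have step1 : ((s : ℂ) + 1) * Phi j a ((((toeplitzA a).transpose) ^ s).mulVec q)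
      = ∑ m : Fin n, ∑ r : Fin n, gT (m : ℕ) (r : ℕ) := by
    unfold Phi
    rw [Finset.mul_sum]
    apply Finset.sum_congr rfl
    intro m _
    by_cases h : j.1 ≤ m.1
    · rw [dif_pos h, hY]
      have ha' : a ⟨m.1 - j.1, by have := m.isLt; omega⟩
          = (paPoly a).coeff (m.1 - j.1 + 1) := by
        rw [paPoly_coeff, dif_pos ⟨by omega, by have := m.isLt; omega⟩]
        exact congrArg a (Fin.ext (by show m.1 - j.1 = m.1 - j.1 + 1 - 1; omega)).symm
      rw [ha', Finset.mul_sum, Finset.mul_sum]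
      apply Finset.sum_congr rfl
      intro r _
      simp only [hgT]
      by_cases h2 : m.1 ≤ r.1
      · rw [if_pos h2, dif_pos ⟨h, h2, r.isLt⟩]
      · rw [if_neg h2, dif_neg (by omega)]
        ring
    · rw [dif_neg h, mul_zero]
      symm
      apply Finset.sum_eq_zero
      intro r _
      simp only [hgT]
      rw [dif_neg (by omega)]
  have step2 : Phi j (((toeplitzA a) ^ s).mulVec a) q
      = ∑ r : Fin n, if h : j.1 ≤ r.1 then
          ((r.1 - j.1 + 1 : ℕ) : ℂ) * ((paPoly a) ^ (s + 1)).coeff (r.1 - j.1 + 1) * q r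
        else 0 := by
    unfold Phi
    apply Finset.sum_congr rfl
    intro m _
    by_cases h : j.1 ≤ m.1
    · rw [dif_pos h, dif_pos h, pow_mulVec]
    · rw [dif_neg h, dif_neg h]
  rw [step1, step2, Finset.sum_comm]
  apply Finset.sum_congr rfl
  intro r _
  by_cases hjr : j.1 ≤ r.1
  · rw [dif_pos hjr]
    have hfin : ∀ m : Fin n, gT (m : ℕ) (r : ℕ) = (fun x => gT x (r : ℕ)) (m : ℕ) :=
      fun m => rfl
    rw [Finset.sum_congr rfl fun m _ => hfin m,
      Fin.sum_univ_eq_sum_range (fun x => gT x (r : ℕ))]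
    have hsub : Finset.Ico (j : ℕ) ((r : ℕ) + 1) ⊆ Finset.range n := by
      intro x hx; rw [Finset.mem_Ico] at hx; rw [Finset.mem_range]; have := r.isLt; omega
    rw [← Finset.sum_subset hsub (by
      intro x hx hx'
      rw [Finset.mem_Ico] at hx'
      simp only [hgT]
      exact dif_neg (by omega))]
    rw [Finset.sum_Ico_eq_sum_range]
    have hd := coeff_pow_deriv (paPoly a) s (r.1 - j.1 + 1) (by omega)
    calc ((r.1 - j.1 + 1 : ℕ) : ℂ) * ((paPoly a) ^ (s + 1)).coeff (r.1 - j.1 + 1) * q r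
        = (((r.1 - j.1 + 1 : ℕ) : ℂ) * ((paPoly a) ^ (s + 1)).coeff (r.1 - j.1 + 1)) * q r := by
          ring
      _ = (((s : ℂ) + 1) * ∑ y ∈ Finset.range (r.1 - j.1 + 1),
            ((paPoly a).coeff (y + 1) * ((y : ℂ) + 1)) *
              ((paPoly a) ^ s).coeff (r.1 - j.1 + 1 - 1 - y)) * q r := by rw [hd]
      _ = ∑ y ∈ Finset.range (r.1 - j.1 + 1),
            (((s : ℂ) + 1) * (((paPoly a).coeff (y + 1) * ((y : ℂ) + 1)) *
              ((paPoly a) ^ s).coeff (r.1 - j.1 + 1 - 1 - y))) * q r := by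
          rw [Finset.mul_sum, Finset.sum_mul]
      _ = ∑ y ∈ Finset.range ((r : ℕ) + 1 - j), gT ((j : ℕ) + y) (r : ℕ) := by
          rw [show (r : ℕ) + 1 - (j : ℕ) = r.1 - j.1 + 1 by omega]
          apply Finset.sum_congr rfl
          intro y hy
          rw [Finset.mem_range] at hy
          simp only [hgT]
          rw [dif_pos ⟨by omega, by omega, r.isLt⟩]
          rw [show (j : ℕ) + y - j.1 + 1 = y + 1 by omega,
            show (r : ℕ) - ((j : ℕ) + y) = r.1 - j.1 + 1 - 1 - y by omega]
          have : q ⟨(r : ℕ), r.isLt⟩ = q r := congrArg q (Fin.ext rfl)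
          rw [this]
          push_cast
          ring
  · rw [dif_neg hjr]
    symm
    apply Finset.sum_eq_zero
    intro m _
    simp only [hgT]
    exact dif_neg (by omega)

end Aux

/-- `Φ_1, …, Φ_n` are first integrals of the coupled phase/adjoint system. -/
theorem Phi_first_integrals
    (n : ℕ) (hn : 1 ≤ n) (I : Set ℝ) (hI : Convex ℝ I)
    (u : ℝ → ℝ) (hu : ContinuousOn u I)
    (a q : ℝ → Fin n → ℂ)
    (ha : ∀ t ∈ I, ∀ k : Fin n,
      HasDerivWithinAt (fun s => a s k)
        (-(a t k) - 2 * ∑ s ∈ Finset.Icc 1 (n - 1),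
          Complex.exp (-(s : ℂ) * (u t : ℂ) * Complex.I) *
            ((toeplitzA (a t) ^ s).mulVec (a t)) k) I t)
    (hq : ∀ t ∈ I, ∀ k : Fin n,
      HasDerivWithinAt (fun s => q s k)
        (q t k + 2 * ∑ s ∈ Finset.Icc 1 (n - 1),
          Complex.exp (-(s : ℂ) * (u t : ℂ) * Complex.I) * ((s : ℂ) + 1) *
            (((toeplitzA (a t)).transpose ^ s).mulVec (q t)) k) I t) :
    ∀ j : Fin n, ∀ t ∈ I, ∀ t' ∈ I,
      Phi j (a t) (q t) = Phi j (a t') (q t') := by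
  intro j t ht t' ht'
  -- the function and its zero derivative
  have hF : ∀ τ ∈ I, HasDerivWithinAt (fun τ => Phi j (a τ) (q τ)) 0 I τ := by
    intro τ hτ
    set E := Finset.Icc 1 (n - 1) with hE
    set e : ℕ → ℂ := fun s => Complex.exp (-(s : ℂ) * (u τ : ℂ) * Complex.I) with he
    set X : ℕ → Fin n → ℂ := fun s => (toeplitzA (a τ) ^ s).mulVec (a τ) with hX
    set Y : ℕ → Fin n → ℂ := fun s => (((toeplitzA (a τ)).transpose) ^ s).mulVec (q τ) with hY
    set c : Fin n → ℂ := fun m => ((m.1 - j.1 + 1 : ℕ) : ℂ) with hc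
    set k' : Fin n → Fin n := fun m => ⟨m.1 - j.1, by have := m.isLt; omega⟩ with hk'
    set D : ℂ := ∑ m : Fin n, if j.1 ≤ m.1 then
        (c m * (-(a τ (k' m)) - 2 * ∑ s ∈ E, e s * X s (k' m))) * q τ m
        + (c m * a τ (k' m)) * (q τ m + 2 * ∑ s ∈ E, e s * ((s : ℂ) + 1) * Y s m)
      else 0 with hD
    have hderiv : HasDerivWithinAt (fun τ => Phi j (a τ) (q τ)) D I τ := by
      unfold Phi
      rw [hD]
      apply HasDerivWithinAt.fun_sum
      intro m _
      by_cases h : j.1 ≤ m.1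
      · simp only [dif_pos h, if_pos h]
        exact ((ha τ hτ (k' m)).const_mul (c m)).mul (hq τ hτ m)
      · simp only [dif_neg h, if_neg h]
        exact hasDerivWithinAt_const τ I 0
    have hzero : D = 0 := by
      rw [hD]
      have hswap : ∑ m : Fin n, (if j.1 ≤ m.1 then
          (c m * (-(a τ (k' m)) - 2 * ∑ s ∈ E, e s * X s (k' m))) * q τ m
          + (c m * a τ (k' m)) * (q τ m + 2 * ∑ s ∈ E, e s * ((s : ℂ) + 1) * Y s m)
        else 0)
          = ∑ m : Fin n, ∑ s ∈ E, (if j.1 ≤ m.1 then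
              2 * e s * (((s : ℂ) + 1) * (c m * a τ (k' m) * Y s m)
                - c m * X s (k' m) * q τ m)
            else 0) := by
        apply Finset.sum_congr rfl
        intro m _
        by_cases h : j.1 ≤ m.1
        · simp only [if_pos h]
          have h1 : (c m * a τ (k' m)) * (2 * ∑ s ∈ E, e s * ((s : ℂ) + 1) * Y s m)
              = ∑ s ∈ E, (c m * a τ (k' m)) * (2 * (e s * ((s : ℂ) + 1) * Y s m)) := by
            rw [Finset.mul_sum, Finset.mul_sum]
          have h2 : (c m * q τ m) * (2 * ∑ s ∈ E, e s * X s (k' m))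
              = ∑ s ∈ E, (c m * q τ m) * (2 * (e s * X s (k' m))) := by
            rw [Finset.mul_sum, Finset.mul_sum]
          calc (c m * (-(a τ (k' m)) - 2 * ∑ s ∈ E, e s * X s (k' m))) * q τ m
              + (c m * a τ (k' m)) * (q τ m + 2 * ∑ s ∈ E, e s * ((s : ℂ) + 1) * Y s m)
              = (c m * a τ (k' m)) * (2 * ∑ s ∈ E, e s * ((s : ℂ) + 1) * Y s m)
                - (c m * q τ m) * (2 * ∑ s ∈ E, e s * X s (k' m)) := by ring
            _ = ∑ s ∈ E, ((c m * a τ (k' m)) * (2 * (e s * ((s : ℂ) + 1) * Y s m))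
                - (c m * q τ m) * (2 * (e s * X s (k' m)))) := by
                rw [h1, h2, ← Finset.sum_sub_distrib]
            _ = _ := by
                apply Finset.sum_congr rfl
                intro s _
                ring
        · simp only [if_neg h]
          rw [Finset.sum_const_zero]
      rw [hswap, Finset.sum_comm]
      apply Finset.sum_eq_zero
      intro s _
      have hPhi : ∑ m : Fin n, (if j.1 ≤ m.1 then
            2 * e s * (((s : ℂ) + 1) * (c m * a τ (k' m) * Y s m)
              - c m * X s (k' m) * q τ m)
          else 0)
          = 2 * e s * (((s : ℂ) + 1) * Phi j (a τ) (Y s) - Phi j (X s) (q τ)) := by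
        unfold Phi
        rw [mul_sub, Finset.mul_sum, Finset.mul_sum, Finset.mul_sum, ← Finset.sum_sub_distrib]
        apply Finset.sum_congr rfl
        intro m _
        by_cases h : j.1 ≤ m.1
        · simp only [if_pos h, dif_pos h]
          ring
        · simp only [if_neg h, dif_neg h]
          ring
      rw [hPhi, hX, hY]
      simp only []
      rw [key_identity (a τ) (q τ) j s]
      ring
    rw [hzero] at hderiv
    exact hderiv
  have := hI.norm_image_sub_le_of_norm_hasDerivWithin_le
    (f' := fun _ => (0 : ℂ)) (C := 0) hF (fun x _ => by simp) ht' ht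
  simp only [zero_mul] at this
  have h0 := norm_le_zero_iff.mp this
  rw [sub_eq_zero] at h0
  exact h0
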